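/- For every n ≥ 3, the Möbius ladder M_n is triangle-free (for n ≥ 3, M_3 being K_{3,3}), contains a K_{3,3} subdivision (hence is non-planar), and is inseparable: it is connected, has no separating complete subgraph, no separating pair of vertices, and no separating complete subgraph suspension. -/

import Mathlib

open SimpleGraph

/-! ### Right-angled Coxeter groups -/

/-- The relators of the right-angled Coxeter group of a graph `G`: the square of each
generator, and a commuting relator `s * t * (t * s)⁻¹` for each edge of `G`. -/
def racgRels {V : Type} (G : SimpleGraph V) : Set (FreeGroup V) :=
  {r | (∃ s : V, r = FreeGroup.of s * FreeGroup.of s) ∨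
    (∃ s t : V, G.Adj s t ∧
      r = (FreeGroup.of s * FreeGroup.of t) * (FreeGroup.of t * FreeGroup.of s)⁻¹)}

/-- The right-angled Coxeter group of a graph. -/
abbrev RACG {V : Type} (G : SimpleGraph V) := PresentedGroup (racgRels G)

/-! ### The double of a graph over a vertex -/

/-- Vertices of the double of `G` over `v`: one vertex for each vertex of the link of `v`,
and a pair of vertices for each vertex outside the closed star of `v`. -/
def DoubleVert {V : Type} (G : SimpleGraph V) (v : V) : Type :=
  {u : V // G.Adj v u} ⊕ ({u : V // u ≠ v ∧ ¬ G.Adj v u} × Bool)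

namespace DoubleVert

/-- The projection of a vertex of the double to the original graph. -/
def toV {V : Type} {G : SimpleGraph V} {v : V} : DoubleVert G v → V :=
  Sum.elim Subtype.val fun p => p.1.1

/-- The copy (none for link vertices) in which a vertex of the double lives. -/
def copy {V : Type} {G : SimpleGraph V} {v : V} : DoubleVert G v → Option Bool :=
  Sum.elim (fun _ => none) fun p => some p.2

instance {V : Type} [Finite V] {G : SimpleGraph V} {v : V} : Finite (DoubleVert G v) := by
  unfold DoubleVert; infer_instance

end DoubleVert

/-- The double `D_v G` of a graph `G` over the vertex `v`: two copies of `G` minus the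
open star of `v`, glued along the link of `v`. -/
def Double {V : Type} (G : SimpleGraph V) (v : V) : SimpleGraph (DoubleVert G v) where
  Adj a b := G.Adj a.toV b.toV ∧ (a.copy = none ∨ b.copy = none ∨ a.copy = b.copy)
  symm := by
    constructor
    rintro a b ⟨h1, h2⟩
    refine ⟨h1.symm, ?_⟩
    tauto
  loopless := ⟨fun a h => G.irrefl h.1⟩

/-! ### Bundled finite graphs, doubling moves, and subdivisions -/

/-- A bundled finite simple graph. -/
structure FinGraph : Type 1 where
  V : Type
  finite : Finite V
  graph : SimpleGraph V

attribute [instance] FinGraph.finite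

/-- `H` is obtained from `G` by doubling over some vertex (up to isomorphism). -/
def DoubleMove (G H : FinGraph) : Prop :=
  ∃ v : G.V, Nonempty (H.graph ≃g Double G.graph v)

/-- `DoublingSeq n G H` : `H` is obtained from `G` by a sequence of `n` doubling moves. -/
inductive DoublingSeq : ℕ → FinGraph → FinGraph → Prop
  | refl (G : FinGraph) : DoublingSeq 0 G G
  | step {n : ℕ} {G G' G'' : FinGraph} :
      DoublingSeq n G G' → DoubleMove G' G'' → DoublingSeq (n + 1) G G''

/-- The graph obtained from `G` by subdividing the edge between `u` and `w`:
the new vertex is `none`. -/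
def subdivideEdge {V : Type} (G : SimpleGraph V) (u w : V) : SimpleGraph (Option V) where
  Adj a b :=
    match a, b with
    | some a, some b => G.Adj a b ∧ ¬(a = u ∧ b = w) ∧ ¬(a = w ∧ b = u)
    | some a, none => a = u ∨ a = w
    | none, some b => b = u ∨ b = w
    | none, none => False
  symm := by
    constructor
    rintro (_ | a) (_ | b) h
    · exact h
    · exact h
    · exact h
    · exact ⟨h.1.symm, fun hc => h.2.2 ⟨hc.2, hc.1⟩, fun hc => h.2.1 ⟨hc.2, hc.1⟩⟩
  loopless := by
    constructor
    rintro (_ | a) h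
    · exact h
    · exact G.irrefl h.1

/-- One subdivision step between bundled graphs. -/
def SubdivStep (G H : FinGraph) : Prop :=
  ∃ u w : G.V, G.graph.Adj u w ∧ Nonempty (H.graph ≃g subdivideEdge G.graph u w)

/-- `G` is obtained from `H` by a finite (possibly empty) sequence of edge subdivisions. -/
def IsSubdivisionOf (H G : FinGraph) : Prop := Relation.ReflTransGen SubdivStep H G

/-- The complete bipartite graph `K_{3,3}` as a bundled graph. -/
def K33Graph : FinGraph := ⟨Fin 3 ⊕ Fin 3, inferInstance, completeBipartiteGraph (Fin 3) (Fin 3)⟩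

/-- The complete graph `K_5` as a bundled graph. -/
def K5Graph : FinGraph := ⟨Fin 5, inferInstance, completeGraph (Fin 5)⟩

/-- The subgraph `Λ` of `G` is (isomorphic to) a subdivision of the bundled graph `H`. -/
def IsSubdivCopy (H : FinGraph) {V : Type} (G : SimpleGraph V) (Λ : G.Subgraph) : Prop :=
  ∃ H' : FinGraph, IsSubdivisionOf H H' ∧ Nonempty (H'.graph ≃g Λ.coe)

/-- `G` contains a subgraph which is a subdivision of `H`. -/
def ContainsSubdivOf (H : FinGraph) {V : Type} (G : SimpleGraph V) : Prop :=
  ∃ Λ : G.Subgraph, IsSubdivCopy H G Λ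

/-- `Λ` is a `K_{3,3}` subdivision in `G`. -/
def IsK33Sub {V : Type} (G : SimpleGraph V) (Λ : G.Subgraph) : Prop := IsSubdivCopy K33Graph G Λ

/-- `Λ` is a `K_5` subdivision in `G`. -/
def IsK5Sub {V : Type} (G : SimpleGraph V) (Λ : G.Subgraph) : Prop := IsSubdivCopy K5Graph G Λ

/-! ### Essential vertices, branches, bad edges -/

/-- The valence of `v` in the subgraph `Λ`. -/
noncomputable def essDeg {V : Type} {G : SimpleGraph V} (Λ : G.Subgraph) (v : V) : ℕ :=
  (Λ.neighborSet v).ncard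

/-- A vertex is `Λ`-essential if its valence in `Λ` is at least 3. -/
def Essential {V : Type} {G : SimpleGraph V} (Λ : G.Subgraph) (v : V) : Prop := 3 ≤ essDeg Λ v

/-- A vertex is `Λ`-non-essential if its valence in `Λ` is 2. -/
def NonEssential {V : Type} {G : SimpleGraph V} (Λ : G.Subgraph) (v : V) : Prop := essDeg Λ v = 2

/-- A branch of `Λ`: an embedded path in `Λ` between `Λ`-essential vertices whose interior
contains no `Λ`-essential vertex. -/
structure IsBranch {V : Type} {G : SimpleGraph V} (Λ : G.Subgraph) {s t : V}
    (p : G.Walk s t) : Prop where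
  isPath : p.IsPath
  pos : 0 < p.length
  mem_edges : ∀ e ∈ p.edges, e ∈ Λ.edgeSet
  ess_fst : Essential Λ s
  ess_snd : Essential Λ t
  interior : ∀ v ∈ p.support, v ≠ s → v ≠ t → ¬ Essential Λ v

/-- A bad edge of `Λ`: an edge of `G` with both endpoints in `Λ` which is not an edge of `Λ`. -/
def IsBadEdge {V : Type} (G : SimpleGraph V) (Λ : G.Subgraph) (e : Sym2 V) : Prop :=
  e ∈ G.edgeSet ∧ (∀ v ∈ e, v ∈ Λ.verts) ∧ e ∉ Λ.edgeSet

/-- The set of bad edges of `Λ`. -/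
def badEdgeSet {V : Type} (G : SimpleGraph V) (Λ : G.Subgraph) : Set (Sym2 V) :=
  {e | IsBadEdge G Λ e}

/-- `B(Λ)`, the number of bad edges of `Λ`. -/
noncomputable def badCount {V : Type} (G : SimpleGraph V) (Λ : G.Subgraph) : ℕ :=
  (badEdgeSet G Λ).ncard

/-- The number of edges of a subgraph. -/
noncomputable def numEdges {V : Type} {G : SimpleGraph V} (Λ : G.Subgraph) : ℕ :=
  Λ.edgeSet.ncard

/-- `Λ` is a `K_{3,3}` subdivision which is shortest among all `K_{3,3}` subdivisions in `G`
having at most `B(Λ)` bad edges. -/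
def ShortestK33 {V : Type} (G : SimpleGraph V) (Λ : G.Subgraph) : Prop :=
  IsK33Sub G Λ ∧ ∀ Λ₂ : G.Subgraph, IsK33Sub G Λ₂ → badCount G Λ₂ ≤ badCount G Λ →
    numEdges Λ ≤ numEdges Λ₂

/-- A vertex partition `{a,b,c}`, `{x,y,z}` for a `K_{3,3}` subdivision `Λ`: six distinct
vertices which are exactly the `Λ`-essential vertices, with a branch of `Λ` joining each of
`a, b, c` to each of `x, y, z`. -/
structure IsVertexPartition {V : Type} {G : SimpleGraph V} (Λ : G.Subgraph)
    (a b c x y z : V) : Prop where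
  nodup : ([a, b, c, x, y, z] : List V).Nodup
  ess_iff : ∀ v, Essential Λ v ↔ v ∈ ({a, b, c, x, y, z} : Set V)
  branches : ∀ s ∈ ({a, b, c} : Set V), ∀ t ∈ ({x, y, z} : Set V),
    ∃ p : G.Walk s t, IsBranch Λ p

/-- `Λ` is an induced subgraph of `G`. -/
def IsInducedSub {V : Type} (G : SimpleGraph V) (Λ : G.Subgraph) : Prop :=
  ∀ e ∈ G.edgeSet, (∀ v ∈ e, v ∈ Λ.verts) → e ∈ Λ.edgeSet

/-- The induced subgraph on `Λ` consists of `Λ` plus exactly the edges `x-y` and `y-z`. -/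
def FormTwoExtra {V : Type} (G : SimpleGraph V) (Λ : G.Subgraph) (x y z : V) : Prop :=
  badEdgeSet G Λ = {s(x, y), s(y, z)}

/-- The induced subgraph on `Λ` consists of `Λ` plus exactly the edges `x-y`, `y-z`, `a-b`,
`b-c`, and the branches `[a,y]`, `[c,y]`, `[b,x]`, `[b,z]` are single edges. -/
def FormFourExtra {V : Type} (G : SimpleGraph V) (Λ : G.Subgraph) (a b c x y z : V) : Prop :=
  badEdgeSet G Λ = {s(x, y), s(y, z), s(a, b), s(b, c)} ∧
    (∀ p : G.Walk a y, IsBranch Λ p → p.length = 1) ∧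
    (∀ p : G.Walk c y, IsBranch Λ p → p.length = 1) ∧
    (∀ p : G.Walk b x, IsBranch Λ p → p.length = 1) ∧
    (∀ p : G.Walk b z, IsBranch Λ p → p.length = 1)

/-- `Λ` is a `K_{3,3}` subdivision which is either induced, or induces one of the two special
graphs of Dani–Haulmark–Walsh. -/
def GoodK33Outcome {V : Type} (G : SimpleGraph V) (Λ : G.Subgraph) : Prop :=
  IsK33Sub G Λ ∧ (IsInducedSub G Λ ∨
    ∃ a b c x y z : V, IsVertexPartition Λ a b c x y z ∧
      (FormTwoExtra G Λ x y z ∨ FormFourExtra G Λ a b c x y z))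

/-! ### Möbius ladders and separating sets -/

/-- The Möbius ladder `M_n`, on vertex set `ZMod (2 * n)`: the cycle edges `i — i+1`
together with the rungs `i — i+n`. -/
def MobiusLadder (n : ℕ) : SimpleGraph (ZMod (2 * n)) where
  Adj i j := i ≠ j ∧ (i = j + 1 ∨ j = i + 1 ∨ i = j + (n : ZMod (2 * n)))
  symm := by
    constructor
    rintro i j ⟨hne, h⟩
    refine ⟨hne.symm, ?_⟩
    rcases h with h | h | h
    · exact Or.inr (Or.inl h)
    · exact Or.inl h
    · refine Or.inr (Or.inr ?_)
      have hnn : (n : ZMod (2 * n)) + (n : ZMod (2 * n)) = 0 := by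
        have h2 : ((2 * n : ℕ) : ZMod (2 * n)) = 0 := ZMod.natCast_self _
        push_cast at h2
        linear_combination h2
      rw [h, add_assoc, hnn, add_zero]
  loopless := ⟨fun i h => h.1 rfl⟩

/-- `S` separates `G` if deleting `S` yields a disconnected graph. -/
def Separates {V : Type} (G : SimpleGraph V) (S : Set V) : Prop :=
  ¬ (G.induce Sᶜ).Connected

section Part1
variable {n : ℕ}

lemma cast_eq_iff (a b : ℕ) :
    ((a : ZMod (2*n)) = (b : ZMod (2*n))) ↔ a % (2*n) = b % (2*n) := by
  rw [ZMod.natCast_eq_natCast_iff]; rfl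

lemma int_cast_nz (c : ℤ) (h0 : 0 < c) (h1 : c < 2*n) : ((c : ℤ) : ZMod (2*n)) ≠ 0 := by
  intro h
  have hd := (ZMod.intCast_zmod_eq_zero_iff_dvd c (2*n)).1 h
  have := Int.le_of_dvd h0 hd
  push_cast at this; omega

lemma nn_zero : ((n:ℕ) : ZMod (2*n)) + ((n:ℕ) : ZMod (2*n)) = 0 := by
  have : (((2*n:ℕ)) : ZMod (2*n)) = 0 := ZMod.natCast_self _
  push_cast at this ⊢; linear_combination this

lemma adj_diff (hn : 3 ≤ n) {x y : ZMod (2*n)} (h : (MobiusLadder n).Adj x y) :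
    y - x = 1 ∨ y - x = -1 ∨ y - x = ((n:ℕ) : ZMod (2*n)) := by
  obtain ⟨hne, h|h|h⟩ := h
  · right; left; linear_combination -h
  · left; linear_combination h
  · right; right; linear_combination -h - nn_zero

set_option maxHeartbeats 2000000 in
lemma sum_ne (hn : 3 ≤ n) (v1 v2 v3 : ZMod (2*n))
    (h1 : v1 = 1 ∨ v1 = -1 ∨ v1 = ((n:ℕ) : ZMod (2*n)))
    (h2 : v2 = 1 ∨ v2 = -1 ∨ v2 = ((n:ℕ) : ZMod (2*n)))
    (h3 : v3 = 1 ∨ v3 = -1 ∨ v3 = ((n:ℕ) : ZMod (2*n))) :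
    v1 + v3 ≠ v2 := by
  have h2n := nn_zero (n := n)
  rcases h1 with rfl|rfl|rfl <;> rcases h2 with rfl|rfl|rfl <;> rcases h3 with rfl|rfl|rfl <;>
    intro h <;>
  first
  | exact int_cast_nz 1 (by omega) (by omega) (show ((1:ℤ):ZMod (2*n)) = 0 by push_cast; linear_combination h)
  | exact int_cast_nz 1 (by omega) (by omega) (show ((1:ℤ):ZMod (2*n)) = 0 by push_cast; linear_combination -h)
  | exact int_cast_nz 2 (by omega) (by omega) (show ((2:ℤ):ZMod (2*n)) = 0 by push_cast; linear_combination h)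
  | exact int_cast_nz 2 (by omega) (by omega) (show ((2:ℤ):ZMod (2*n)) = 0 by push_cast; linear_combination -h)
  | exact int_cast_nz 3 (by omega) (by omega) (show ((3:ℤ):ZMod (2*n)) = 0 by push_cast; linear_combination h)
  | exact int_cast_nz 3 (by omega) (by omega) (show ((3:ℤ):ZMod (2*n)) = 0 by push_cast; linear_combination -h)
  | exact int_cast_nz ((n:ℤ)-2) (by omega) (by omega) (show (((n:ℤ)-2:ℤ):ZMod (2*n)) = 0 by push_cast; linear_combination h)
  | exact int_cast_nz ((n:ℤ)-2) (by omega) (by omega) (show (((n:ℤ)-2:ℤ):ZMod (2*n)) = 0 by push_cast; linear_combination -h)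
  | exact int_cast_nz ((n:ℤ)-2) (by omega) (by omega) (show (((n:ℤ)-2:ℤ):ZMod (2*n)) = 0 by push_cast; linear_combination h - h2n)
  | exact int_cast_nz ((n:ℤ)-2) (by omega) (by omega) (show (((n:ℤ)-2:ℤ):ZMod (2*n)) = 0 by push_cast; linear_combination -h - h2n)
  | exact int_cast_nz (n:ℤ) (by omega) (by omega) (show (((n:ℤ)):ZMod (2*n)) = 0 by push_cast; linear_combination h)
  | exact int_cast_nz (n:ℤ) (by omega) (by omega) (show (((n:ℤ)):ZMod (2*n)) = 0 by push_cast; linear_combination -h)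
  | exact int_cast_nz (n:ℤ) (by omega) (by omega) (show (((n:ℤ)):ZMod (2*n)) = 0 by push_cast; linear_combination h - h2n)
  | exact int_cast_nz (n:ℤ) (by omega) (by omega) (show (((n:ℤ)):ZMod (2*n)) = 0 by push_cast; linear_combination -h - h2n)
  | exact int_cast_nz ((n:ℤ)+2) (by omega) (by omega) (show (((n:ℤ)+2:ℤ):ZMod (2*n)) = 0 by push_cast; linear_combination h)
  | exact int_cast_nz ((n:ℤ)+2) (by omega) (by omega) (show (((n:ℤ)+2:ℤ):ZMod (2*n)) = 0 by push_cast; linear_combination -h)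
  | exact int_cast_nz ((n:ℤ)+2) (by omega) (by omega) (show (((n:ℤ)+2:ℤ):ZMod (2*n)) = 0 by push_cast; linear_combination h - h2n)
  | exact int_cast_nz ((n:ℤ)+2) (by omega) (by omega) (show (((n:ℤ)+2:ℤ):ZMod (2*n)) = 0 by push_cast; linear_combination -h - h2n)
  | exact int_cast_nz 1 (by omega) (by omega) (show ((1:ℤ):ZMod (2*n)) = 0 by push_cast; linear_combination h - h2n)
  | exact int_cast_nz 1 (by omega) (by omega) (show ((1:ℤ):ZMod (2*n)) = 0 by push_cast; linear_combination h2n - h)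
  | exact int_cast_nz 2 (by omega) (by omega) (show ((2:ℤ):ZMod (2*n)) = 0 by push_cast; linear_combination h - h2n)
  | exact int_cast_nz 2 (by omega) (by omega) (show ((2:ℤ):ZMod (2*n)) = 0 by push_cast; linear_combination h2n - h)
  | exact int_cast_nz 3 (by omega) (by omega) (show ((3:ℤ):ZMod (2*n)) = 0 by push_cast; linear_combination h - h2n)
  | exact int_cast_nz 3 (by omega) (by omega) (show ((3:ℤ):ZMod (2*n)) = 0 by push_cast; linear_combination h2n - h)

lemma mob_cliquefree (hn : 3 ≤ n) : (MobiusLadder n).CliqueFree 3 := by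
  intro t ht
  rw [is3Clique_iff] at ht
  obtain ⟨a, b, c, hab, hac, hbc, -⟩ := ht
  exact sum_ne hn (b-a) (c-a) (c-b) (adj_diff hn hab) (adj_diff hn hac) (adj_diff hn hbc)
    (by ring)
end Part1

section Conn
variable {n : ℕ}

lemma one_nz (hn : 3 ≤ n) : (1 : ZMod (2*n)) ≠ 0 := by
  have := int_cast_nz (n := n) 1 (by omega) (by omega)
  push_cast at this; exact this

lemma mob_adj_succ (hn : 3 ≤ n) (x : ZMod (2*n)) : (MobiusLadder n).Adj x (x+1) := by
  refine ⟨fun h => one_nz hn (by linear_combination -h), Or.inr (Or.inl rfl)⟩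

lemma mob_adj_rung (hn : 3 ≤ n) (x : ZMod (2*n)) :
    (MobiusLadder n).Adj x (x + ((n:ℕ) : ZMod (2*n))) := by
  refine ⟨fun h => ?_, Or.inr (Or.inr (by linear_combination - nn_zero (n := n)))⟩
  have hz : ((n:ℕ) : ZMod (2*n)) = 0 := by linear_combination -h
  exact int_cast_nz (n := n) (n:ℤ) (by omega) (by omega) (by push_cast; exact hz)

lemma mob_arc (hn : 3 ≤ n) (S : Set (ZMod (2*n))) (m : ℕ) :
    ∀ (x y : ZMod (2*n)) (hx : x ∈ Sᶜ) (hy : y ∈ Sᶜ), y = x + (m : ℕ) →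
    (∀ j, j ≤ m → x + (j : ℕ) ∉ S) →
    ((MobiusLadder n).induce Sᶜ).Reachable ⟨x, hx⟩ ⟨y, hy⟩ := by
  induction m with
  | zero =>
    intro x y hx hy hxy _
    have : x = y := by rw [hxy]; push_cast; ring
    subst this; rfl
  | succ m ih =>
    intro x y hx hy hxy h
    have hpen : x + (m:ℕ) ∈ Sᶜ := h m (by omega)
    refine (ih x _ hx hpen rfl (fun j hj => h j (by omega))).trans ?_
    refine SimpleGraph.Adj.reachable ?_
    show ((MobiusLadder n).induce Sᶜ).Adj ⟨x + (m:ℕ), hpen⟩ ⟨y, hy⟩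
    have hy2 : y = (x + (m:ℕ)) + 1 := by rw [hxy]; push_cast; ring
    subst hy2
    simp only [SimpleGraph.comap_adj, Function.Embedding.coe_subtype]
    exact mob_adj_succ hn _

lemma mob_rung_reach (hn : 3 ≤ n) (S : Set (ZMod (2*n))) (x y : ZMod (2*n))
    (hx : x ∈ Sᶜ) (hy : y ∈ Sᶜ) (hxy : y = x + ((n:ℕ) : ZMod (2*n))) :
    ((MobiusLadder n).induce Sᶜ).Reachable ⟨x, hx⟩ ⟨y, hy⟩ := by
  refine SimpleGraph.Adj.reachable ?_
  subst hxy
  simp only [SimpleGraph.comap_adj, Function.Embedding.coe_subtype]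
  exact mob_adj_rung hn _

end Conn

section PairDel
variable {n : ℕ}

lemma cast_inj_lt {a b : ℕ} (ha : a < 2*n) (hb : b < 2*n) :
    ((a : ZMod (2*n)) = (b : ZMod (2*n))) ↔ a = b := by
  rw [cast_eq_iff, Nat.mod_eq_of_lt ha, Nat.mod_eq_of_lt hb]

lemma shift_add (u : ZMod (2*n)) (a b c : ℕ) (h : a + b = c) :
    (u + (a:ℕ)) + (b:ℕ) = u + (c:ℕ) := by subst h; push_cast; ring

lemma val_form [NeZero (2*n)] (u v : ZMod (2*n)) : v = u + (((v-u).val : ℕ) : ZMod (2*n)) := by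
  rw [ZMod.natCast_val, ZMod.cast_id]; ring

lemma mob_pair (hn : 3 ≤ n) (u w : ZMod (2*n)) : ¬ Separates (MobiusLadder n) {u, w} := by
  haveI : NeZero (2*n) := ⟨by omega⟩
  rw [Separates, not_not, connected_iff_exists_forall_reachable]
  set S : Set (ZMod (2*n)) := {u, w} with hS
  set d := (w - u).val with hd
  have hdlt : d < 2*n := ZMod.val_lt _
  have hw : w = u + ((d:ℕ) : ZMod (2*n)) := val_form u w
  have hmem : ∀ a : ℕ, a < 2*n → ((u + (a:ℕ) ∈ S) ↔ (a = 0 ∨ a = d)) := by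
    intro a ha
    have e0 : (u + (a:ℕ) = u) ↔ ((a:ℕ) : ZMod (2*n)) = ((0:ℕ):ZMod (2*n)) := by
      constructor <;> intro h <;> linear_combination h
    have ed : (u + (a:ℕ) = w) ↔ ((a:ℕ) : ZMod (2*n)) = ((d:ℕ):ZMod (2*n)) := by
      rw [hw]; constructor <;> intro h <;> linear_combination h
    rw [hS, Set.mem_insert_iff, Set.mem_singleton_iff, e0, ed,
      cast_inj_lt ha (by omega), cast_inj_lt ha hdlt]
  have hnm : ∀ c : ℕ, c ≠ 0 → c ≠ d → c < 2*n → u + (c:ℕ) ∈ Sᶜ := fun c h1 h2 hc hin => by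
    rcases (hmem c hc).1 hin with h|h <;> omega
  have arc : ∀ (a b : ℕ), a ≤ b → b < 2*n →
      (∀ i, a ≤ i → i ≤ b → (i ≠ 0 ∧ i ≠ d)) →
      ∀ (ha : u + (a:ℕ) ∈ Sᶜ) (hb : u + (b:ℕ) ∈ Sᶜ),
      ((MobiusLadder n).induce Sᶜ).Reachable ⟨u + (a:ℕ), ha⟩ ⟨u + (b:ℕ), hb⟩ := by
    intro a b hab hblt hcond ha hb
    refine mob_arc hn S (b - a) _ _ ha hb ?_ ?_
    · exact (shift_add u a (b-a) b (by omega)).symm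
    · intro j hj
      rw [shift_add u a j (a+j) rfl]
      intro hc
      have h2 := hcond (a+j) (by omega) (by omega)
      rcases (hmem (a+j) (by omega)).1 hc with h|h <;> omega
  have rung : ∀ (a b : ℕ), b = a + n →
      ∀ (ha : u + (a:ℕ) ∈ Sᶜ) (hb : u + (b:ℕ) ∈ Sᶜ),
      ((MobiusLadder n).induce Sᶜ).Reachable ⟨u + (a:ℕ), ha⟩ ⟨u + (b:ℕ), hb⟩ := by
    intro a b hb ha hbm
    exact mob_rung_reach hn S _ _ ha hbm (shift_add u a n b (by omega)).symm
  have vform : ∀ v, v ∈ Sᶜ → ∃ j : ℕ, j < 2*n ∧ v = u + (j:ℕ) ∧ j ≠ 0 ∧ j ≠ d := by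
    intro v hv
    refine ⟨(v-u).val, ZMod.val_lt _, val_form u v, ?_, ?_⟩
    · intro h0
      apply hv
      have hvu : v = u := by
        have h2 := val_form u v; rw [h0] at h2; rw [h2]; push_cast; ring
      rw [hS, hvu]; exact Set.mem_insert _ _
    · intro hdd
      apply hv
      have hvw : v = w := by rw [val_form u v, hdd, ← hw]
      rw [hS, hvw]; exact Set.mem_insert_iff.2 (Or.inr rfl)
  rcases (by omega : d = 0 ∨ d = 1 ∨ d = 2*n-1 ∨ (2 ≤ d ∧ d ≤ n) ∨ d = n+1 ∨ (n+2 ≤ d ∧ d ≤ 2*n-2))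
    with hd0 | hd1 | hdtop | ⟨hdl, hdr⟩ | hdn1 | ⟨hdl, hdr⟩
  · refine ⟨⟨u + ((1:ℕ) : ZMod (2*n)), hnm 1 (by omega) (by omega) (by omega)⟩, ?_⟩
    rintro ⟨v, hv⟩
    obtain ⟨j, hjlt, rfl, hj0, hjd⟩ := vform v hv
    exact arc 1 j (by omega) (by omega) (fun i h1 h2 => by omega) _ hv
  · refine ⟨⟨u + ((2:ℕ) : ZMod (2*n)), hnm 2 (by omega) (by omega) (by omega)⟩, ?_⟩
    rintro ⟨v, hv⟩
    obtain ⟨j, hjlt, rfl, hj0, hjd⟩ := vform v hv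
    exact arc 2 j (by omega) (by omega) (fun i h1 h2 => by omega) _ hv
  · refine ⟨⟨u + ((1:ℕ) : ZMod (2*n)), hnm 1 (by omega) (by omega) (by omega)⟩, ?_⟩
    rintro ⟨v, hv⟩
    obtain ⟨j, hjlt, rfl, hj0, hjd⟩ := vform v hv
    exact arc 1 j (by omega) (by omega) (fun i h1 h2 => by omega) _ hv
  · refine ⟨⟨u + ((1:ℕ) : ZMod (2*n)), hnm 1 (by omega) (by omega) (by omega)⟩, ?_⟩
    rintro ⟨v, hv⟩
    obtain ⟨j, hjlt, rfl, hj0, hjd⟩ := vform v hv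
    rcases lt_or_ge j d with hjd' | hjd'
    · exact arc 1 j (by omega) (by omega) (fun i h1 h2 => by omega) _ hv
    · refine (rung 1 (n+1) (by omega) _ (hnm (n+1) (by omega) (by omega) (by omega))).trans ?_
      refine ((arc (d+1) (n+1) (by omega) (by omega) (fun i h1 h2 => by omega)
        (hnm (d+1) (by omega) (by omega) (by omega)) _).symm).trans ?_
      exact arc (d+1) j (by omega) (by omega) (fun i h1 h2 => by omega) _ hv
  · refine ⟨⟨u + ((1:ℕ) : ZMod (2*n)), hnm 1 (by omega) (by omega) (by omega)⟩, ?_⟩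
    rintro ⟨v, hv⟩
    obtain ⟨j, hjlt, rfl, hj0, hjd⟩ := vform v hv
    rcases lt_or_ge j (n+1) with hjd' | hjd'
    · exact arc 1 j (by omega) (by omega) (fun i h1 h2 => by omega) _ hv
    · refine (arc 1 2 (by omega) (by omega) (fun i h1 h2 => by omega) _
        (hnm 2 (by omega) (by omega) (by omega))).trans ?_
      refine (rung 2 (n+2) (by omega) _ (hnm (n+2) (by omega) (by omega) (by omega))).trans ?_
      exact arc (n+2) j (by omega) (by omega) (fun i h1 h2 => by omega) _ hv
  · refine ⟨⟨u + ((1:ℕ) : ZMod (2*n)), hnm 1 (by omega) (by omega) (by omega)⟩, ?_⟩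
    rintro ⟨v, hv⟩
    obtain ⟨j, hjlt, rfl, hj0, hjd⟩ := vform v hv
    rcases lt_or_ge j d with hjd' | hjd'
    · exact arc 1 j (by omega) (by omega) (fun i h1 h2 => by omega) _ hv
    · refine (arc 1 (d+1-n) (by omega) (by omega) (fun i h1 h2 => by omega) _
        (hnm (d+1-n) (by omega) (by omega) (by omega))).trans ?_
      refine (rung (d+1-n) (d+1) (by omega) _ (hnm (d+1) (by omega) (by omega) (by omega))).trans ?_
      exact arc (d+1) j (by omega) (by omega) (fun i h1 h2 => by omega) _ hv
end PairDel

section TripleDel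
variable {n : ℕ}

lemma cast_2n1 (hn : 3 ≤ n) : (((2*n-1:ℕ)) : ZMod (2*n)) = -1 := by
  rw [Nat.cast_sub (by omega)]
  simp [ZMod.natCast_self]

lemma neighbor_form (hn : 3 ≤ n) {k u : ZMod (2*n)} (h : (MobiusLadder n).Adj k u) :
    ∃ a : ℕ, (1 = a ∨ n = a ∨ 2*n-1 = a) ∧ u = k + (a:ℕ) := by
  obtain ⟨hne, h|h|h⟩ := h
  · exact ⟨2*n-1, Or.inr (Or.inr rfl), by rw [cast_2n1 hn]; linear_combination -h⟩
  · exact ⟨1, Or.inl rfl, by push_cast; linear_combination h⟩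
  · exact ⟨n, Or.inr (Or.inl rfl), by linear_combination -h - nn_zero⟩

lemma mob_triple_core (hn : 3 ≤ n) (k : ZMod (2*n)) (a b : ℕ)
    (hab : (1 = a ∧ n = b) ∨ (1 = a ∧ 2*n-1 = b) ∨ (n = a ∧ 2*n-1 = b)) :
    ¬ Separates (MobiusLadder n) {k, k + (a:ℕ), k + (b:ℕ)} := by
  haveI : NeZero (2*n) := ⟨by omega⟩
  have halt : a < 2*n := by omega
  have hblt : b < 2*n := by omega
  have ha0 : a ≠ 0 := by omega
  have hb0 : b ≠ 0 := by omega
  have hab' : a ≠ b := by omega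
  rw [Separates, not_not, connected_iff_exists_forall_reachable]
  set S : Set (ZMod (2*n)) := {k, k + (a:ℕ), k + (b:ℕ)} with hS
  have hmem : ∀ c : ℕ, c < 2*n → ((k + (c:ℕ) ∈ S) ↔ (c = 0 ∨ c = a ∨ c = b)) := by
    intro c hc
    have e0 : (k + (c:ℕ) = k) ↔ ((c:ℕ) : ZMod (2*n)) = ((0:ℕ):ZMod (2*n)) := by
      constructor <;> intro h <;> linear_combination h
    have ea : (k + (c:ℕ) = k + (a:ℕ)) ↔ ((c:ℕ) : ZMod (2*n)) = ((a:ℕ):ZMod (2*n)) := by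
      constructor <;> intro h <;> linear_combination h
    have eb : (k + (c:ℕ) = k + (b:ℕ)) ↔ ((c:ℕ) : ZMod (2*n)) = ((b:ℕ):ZMod (2*n)) := by
      constructor <;> intro h <;> linear_combination h
    rw [hS, Set.mem_insert_iff, Set.mem_insert_iff, Set.mem_singleton_iff, e0, ea, eb,
      cast_inj_lt hc (by omega), cast_inj_lt hc halt, cast_inj_lt hc hblt]
  have hnm : ∀ c : ℕ, c ≠ 0 → c ≠ a → c ≠ b → c < 2*n → k + (c:ℕ) ∈ Sᶜ :=
    fun c h1 h2 h3 hc hin => by rcases (hmem c hc).1 hin with h|h|h <;> omega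
  have arc : ∀ (x y : ℕ), x ≤ y → y < 2*n →
      (∀ i, x ≤ i → i ≤ y → (i ≠ 0 ∧ i ≠ a ∧ i ≠ b)) →
      ∀ (hx : k + (x:ℕ) ∈ Sᶜ) (hy : k + (y:ℕ) ∈ Sᶜ),
      ((MobiusLadder n).induce Sᶜ).Reachable ⟨k + (x:ℕ), hx⟩ ⟨k + (y:ℕ), hy⟩ := by
    intro x y hxy hylt hcond hx hy
    refine mob_arc hn S (y - x) _ _ hx hy ?_ ?_
    · exact (shift_add k x (y-x) y (by omega)).symm
    · intro j hj
      rw [shift_add k x j (x+j) rfl]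
      intro hc
      have h2 := hcond (x+j) (by omega) (by omega)
      rcases (hmem (x+j) (by omega)).1 hc with h|h|h <;> omega
  have rung : ∀ (x y : ℕ), y = x + n →
      ∀ (hx : k + (x:ℕ) ∈ Sᶜ) (hy : k + (y:ℕ) ∈ Sᶜ),
      ((MobiusLadder n).induce Sᶜ).Reachable ⟨k + (x:ℕ), hx⟩ ⟨k + (y:ℕ), hy⟩ := by
    intro x y hy hx hym
    exact mob_rung_reach hn S _ _ hx hym (shift_add k x n y (by omega)).symm
  have vform : ∀ v, v ∈ Sᶜ → ∃ j : ℕ, j < 2*n ∧ v = k + (j:ℕ) ∧ j ≠ 0 ∧ j ≠ a ∧ j ≠ b := by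
    intro v hv
    refine ⟨(v-k).val, ZMod.val_lt _, val_form k v, ?_, ?_, ?_⟩
    · intro h0
      apply hv
      have hvk : v = k := by
        have h2 := val_form k v; rw [h0] at h2; rw [h2]; push_cast; ring
      rw [hS, hvk]; exact Set.mem_insert _ _
    · intro hda
      apply hv
      have hva : v = k + (a:ℕ) := by rw [val_form k v, hda]
      rw [hS, hva]; simp
    · intro hdb
      apply hv
      have hvb : v = k + (b:ℕ) := by rw [val_form k v, hdb]
      rw [hS, hvb]; simp
  rcases hab with ⟨rfl, rfl⟩ | ⟨rfl, rfl⟩ | ⟨rfl, rfl⟩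
  · -- {0, 1, n} : base k+2
    refine ⟨⟨k + ((2:ℕ) : ZMod (2*n)), hnm 2 (by omega) (by omega) (by omega) (by omega)⟩, ?_⟩
    rintro ⟨v, hv⟩
    obtain ⟨j, hjlt, rfl, hj0, hja, hjb⟩ := vform v hv
    rcases lt_or_ge j n with hj' | hj'
    · exact arc 2 j (by omega) (by omega) (fun i h1 h2 => by omega) _ hv
    · refine (rung 2 (n+2) (by omega) _ (hnm (n+2) (by omega) (by omega) (by omega) (by omega))).trans ?_
      refine ((arc (n+1) (n+2) (by omega) (by omega) (fun i h1 h2 => by omega)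
        (hnm (n+1) (by omega) (by omega) (by omega) (by omega)) _).symm).trans ?_
      exact arc (n+1) j (by omega) (by omega) (fun i h1 h2 => by omega) _ hv
  · -- {0, 1, 2n-1} : base k+2
    refine ⟨⟨k + ((2:ℕ) : ZMod (2*n)), hnm 2 (by omega) (by omega) (by omega) (by omega)⟩, ?_⟩
    rintro ⟨v, hv⟩
    obtain ⟨j, hjlt, rfl, hj0, hja, hjb⟩ := vform v hv
    exact arc 2 j (by omega) (by omega) (fun i h1 h2 => by omega) _ hv
  · -- {0, n, 2n-1} : base k+1
    refine ⟨⟨k + ((1:ℕ) : ZMod (2*n)), hnm 1 (by omega) (by omega) (by omega) (by omega)⟩, ?_⟩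
    rintro ⟨v, hv⟩
    obtain ⟨j, hjlt, rfl, hj0, hja, hjb⟩ := vform v hv
    rcases lt_or_ge j n with hj' | hj'
    · exact arc 1 j (by omega) (by omega) (fun i h1 h2 => by omega) _ hv
    · refine (rung 1 (n+1) (by omega) _ (hnm (n+1) (by omega) (by omega) (by omega) (by omega))).trans ?_
      exact arc (n+1) j (by omega) (by omega) (fun i h1 h2 => by omega) _ hv

lemma mob_triple (hn : 3 ≤ n) (k u w : ZMod (2*n)) (hu : (MobiusLadder n).Adj k u)
    (hw : (MobiusLadder n).Adj k w) (huw : u ≠ w) :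
    ¬ Separates (MobiusLadder n) {k, u, w} := by
  obtain ⟨a, ha, rfl⟩ := neighbor_form hn hu
  obtain ⟨b, hb, rfl⟩ := neighbor_form hn hw
  have hab : a ≠ b := fun h => huw (by rw [h])
  have comm : ({k, k + ((b:ℕ) : ZMod (2*n)), k + ((a:ℕ) : ZMod (2*n))} : Set (ZMod (2*n)))
      = {k, k + ((a:ℕ) : ZMod (2*n)), k + ((b:ℕ) : ZMod (2*n))} := by
    exact congrArg (insert k) (Set.pair_comm _ _)
  rcases ha with rfl | rfl | rfl <;> rcases hb with rfl | rfl | rfl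
  · omega
  · exact mob_triple_core hn k _ _ (Or.inl ⟨rfl, rfl⟩)
  · exact mob_triple_core hn k _ _ (Or.inr (Or.inl ⟨rfl, rfl⟩))
  · rw [← comm]; exact mob_triple_core hn k _ _ (Or.inl ⟨rfl, rfl⟩)
  · omega
  · exact mob_triple_core hn k _ _ (Or.inr (Or.inr ⟨rfl, rfl⟩))
  · rw [← comm]; exact mob_triple_core hn k _ _ (Or.inr (Or.inl ⟨rfl, rfl⟩))
  · rw [← comm]; exact mob_triple_core hn k _ _ (Or.inr (Or.inr ⟨rfl, rfl⟩))
  · omega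
end TripleDel

section K33Sub

/-- Vertices: `a i`, `b i` branch vertices, `p j` on branch a1–b1, `q j` on branch a0–b2. -/
abbrev QV (k l : ℕ) : Type := (Fin 3 ⊕ Fin 3) ⊕ (Fin k ⊕ Fin l)

def qadj (k l : ℕ) : QV k l → QV k l → Bool
  | Sum.inl (Sum.inl i), Sum.inl (Sum.inr j) =>
      (!(i == 1 && j == 1) && !(i == 0 && j == 2)) ||
      ((k == 0) && (i == 1) && (j == 1)) || ((l == 0) && (i == 0) && (j == 2))
  | Sum.inl (Sum.inl i), Sum.inr (Sum.inl j) => (i == 1) && (j.val == 0)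
  | Sum.inl (Sum.inl i), Sum.inr (Sum.inr j) => (i == 0) && (j.val == 0)
  | Sum.inl (Sum.inr i), Sum.inr (Sum.inl j) => (i == 1) && (j.val + 1 == k)
  | Sum.inl (Sum.inr i), Sum.inr (Sum.inr j) => (i == 2) && (j.val + 1 == l)
  | Sum.inr (Sum.inl j), Sum.inr (Sum.inl j') => j.val + 1 == j'.val
  | Sum.inr (Sum.inr j), Sum.inr (Sum.inr j') => j.val + 1 == j'.val
  | _, _ => false

def QG (k l : ℕ) : SimpleGraph (QV k l) where
  Adj x y := qadj k l x y ∨ qadj k l y x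
  symm := ⟨fun x y h => h.symm⟩
  loopless := by
    constructor
    rintro ((i|i)|(j|j)) h <;> simp [qadj] at h <;> rcases h with h | h <;> omega

/-- The base case: `K33` itself. -/
def qbase : K33Graph.graph ≃g QG 0 0 where
  toFun := fun z => Sum.inl z
  invFun := fun z => match z with
    | Sum.inl z => z
    | Sum.inr (Sum.inl j) => j.elim0
    | Sum.inr (Sum.inr j) => j.elim0
  left_inv := by rintro (z|z) <;> rfl
  right_inv := by rintro ((z|z)|(j|j)) <;> first | rfl | exact j.elim0
  map_rel_iff' := by
    intro a b
    show (QG 0 0).Adj (Sum.inl a) (Sum.inl b) ↔ K33Graph.graph.Adj a b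
    rcases a with i|i <;> rcases b with j|j <;>
      simp [QG, qadj, K33Graph, completeBipartiteGraph_adj] <;> revert i j <;> decide

end K33Sub

section Chain

instance optFinite {W : Type} [Finite W] : Finite (Option W) :=
  Finite.of_equiv (W ⊕ (PUnit : Type)) (Equiv.optionEquivSumPUnit.{0,0} W).symm


/-- Transport of edge subdivision along an isomorphism. -/
def subdivideIso {V V' : Type} {G : SimpleGraph V} {G' : SimpleGraph V'} (e : G ≃g G')
    (u w : V) : subdivideEdge G u w ≃g subdivideEdge G' (e u) (e w) where
  toEquiv := e.toEquiv.optionCongr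
  map_rel_iff' := by
    rintro (a|a) (b|b) <;>
      simp [subdivideEdge, Equiv.optionCongr, e.map_rel_iff, EmbeddingLike.apply_eq_iff_eq]

/-- Extend a subdivision chain by one step, on an isomorphic copy. -/
lemma chain_ext {H' : FinGraph} {W : Type} [hW : Finite W] {Gc : SimpleGraph W}
    (hH : IsSubdivisionOf K33Graph H') (g : H'.graph ≃g Gc) {u w : W} (huw : Gc.Adj u w) :
    IsSubdivisionOf K33Graph ⟨Option W, inferInstance, subdivideEdge Gc u w⟩ := by
  refine Relation.ReflTransGen.tail hH ?_
  refine ⟨g.symm u, g.symm w, ?_, ?_⟩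
  · exact g.symm.map_rel_iff.2 huw
  · constructor
    have e2 := subdivideIso g.symm u w
    exact e2.symm.symm
end Chain

section QStep

lemma QG_adj (k l : ℕ) (x y : QV k l) :
    (QG k l).Adj x y ↔ (qadj k l x y ∨ qadj k l y x) := Iff.rfl

variable {V : Type} {G : SimpleGraph V} {u w : V}

lemma subdiv_adj_ss (a b : V) : (subdivideEdge G u w).Adj (some a) (some b) ↔
    (G.Adj a b ∧ ¬(a = u ∧ b = w) ∧ ¬(a = w ∧ b = u)) := Iff.rfl
lemma subdiv_adj_sn (a : V) : (subdivideEdge G u w).Adj (some a) none ↔ (a = u ∨ a = w) := Iff.rfl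
lemma subdiv_adj_ns (b : V) : (subdivideEdge G u w).Adj none (some b) ↔ (b = u ∨ b = w) := Iff.rfl
lemma subdiv_adj_nn : (subdivideEdge G u w).Adj (none : Option V) none ↔ False := Iff.rfl

def stepEquiv (k l : ℕ) : Option (QV k l) ≃ QV (k+1) l where
  toFun := fun x => match x with
    | none => Sum.inr (Sum.inl (Fin.last k))
    | some (Sum.inl z) => Sum.inl z
    | some (Sum.inr (Sum.inl j)) => Sum.inr (Sum.inl j.castSucc)
    | some (Sum.inr (Sum.inr j)) => Sum.inr (Sum.inr j)
  invFun := fun x => match x with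
    | Sum.inl z => some (Sum.inl z)
    | Sum.inr (Sum.inl j) => if h : j.val < k then some (Sum.inr (Sum.inl ⟨j.val, h⟩)) else none
    | Sum.inr (Sum.inr j) => some (Sum.inr (Sum.inr j))
  left_inv := by
    rintro (_|((z|z)|(j|j))) <;> simp
  right_inv := by
    rintro ((z|z)|(j|j))
    · rfl
    · rfl
    · by_cases h : j.val < k
      · simp [h, Fin.ext_iff]
      · simp [h, Fin.ext_iff, Fin.val_last]
        have := j.isLt; omega
    · rfl

lemma stepEquiv_none (k l : ℕ) : stepEquiv k l none = Sum.inr (Sum.inl (Fin.last k)) := rfl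
lemma stepEquiv_ab (k l : ℕ) (z : Fin 3 ⊕ Fin 3) :
    stepEquiv k l (some (Sum.inl z)) = Sum.inl z := rfl
lemma stepEquiv_p (k l : ℕ) (j : Fin k) :
    stepEquiv k l (some (Sum.inr (Sum.inl j))) = Sum.inr (Sum.inl j.castSucc) := rfl
lemma stepEquiv_q (k l : ℕ) (j : Fin l) :
    stepEquiv k l (some (Sum.inr (Sum.inr j))) = Sum.inr (Sum.inr j) := rfl

lemma qstep0 (l : ℕ) (a b : Option (QV 0 l)) :
    (subdivideEdge (QG 0 l) (Sum.inl (Sum.inl 1)) (Sum.inl (Sum.inr 1))).Adj a b ↔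
    (QG 1 l).Adj (stepEquiv 0 l a) (stepEquiv 0 l b) := by
  rcases a with _|((i|i)|(j|j)) <;> rcases b with _|((i'|i')|(j'|j')) <;>
    simp only [stepEquiv_none, stepEquiv_ab, stepEquiv_p, stepEquiv_q,
      subdiv_adj_ss, subdiv_adj_sn, subdiv_adj_ns, subdiv_adj_nn, QG_adj, qadj,
      Sum.inl.injEq, Sum.inr.injEq, Bool.or_eq_true, Bool.and_eq_true, beq_iff_eq,
      Bool.not_eq_true', Bool.and_eq_false_iff, Fin.coe_castSucc, Fin.val_last,
      decide_eq_true_eq, decide_eq_false_iff_not, beq_eq_false_iff_ne, ne_eq,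
      Fin.ext_iff, false_and, and_false, or_false, false_or, and_true, true_and,
      iff_self, not_false_iff, reduceCtorEq, Sum.elim_inl, Sum.elim_inr] <;>
    first
      | rfl
      | omega
      | tauto
      | (exact j.elim0)
      | (exact j'.elim0)
      | (revert i i'; decide)
      | (revert i; decide)
      | (revert i'; decide)
      | skip

end QStep
section QStep2
lemma qstepS (m l : ℕ) (a b : Option (QV (m+1) l)) :
    (subdivideEdge (QG (m+1) l) (Sum.inr (Sum.inl (Fin.last m))) (Sum.inl (Sum.inr 1))).Adj a b ↔
    (QG (m+2) l).Adj (stepEquiv (m+1) l a) (stepEquiv (m+1) l b) := by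
  rcases a with _|((i|i)|(j|j)) <;> rcases b with _|((i'|i')|(j'|j')) <;>
    simp only [stepEquiv_none, stepEquiv_ab, stepEquiv_p, stepEquiv_q,
      subdiv_adj_ss, subdiv_adj_sn, subdiv_adj_ns, subdiv_adj_nn, QG_adj, qadj,
      Sum.inl.injEq, Sum.inr.injEq, Bool.or_eq_true, Bool.and_eq_true, beq_iff_eq,
      Bool.not_eq_true', Bool.and_eq_false_iff, Fin.coe_castSucc, Fin.val_last,
      decide_eq_true_eq, decide_eq_false_iff_not, beq_eq_false_iff_ne, ne_eq,
      Fin.ext_iff, false_and, and_false, or_false, false_or, and_true, true_and,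
      iff_self, not_false_iff, reduceCtorEq, Sum.elim_inl, Sum.elim_inr,
      Nat.succ_ne_zero] <;>
    first
      | rfl
      | omega
      | tauto
      | (exact iff_of_false id (by omega))
      | (revert i i'; decide)
      | (revert i; decide)
      | (revert i'; decide)
      | skip
end QStep2

section QStepQ

def stepEquivQ (k l : ℕ) : Option (QV k l) ≃ QV k (l+1) where
  toFun := fun x => match x with
    | none => Sum.inr (Sum.inr (Fin.last l))
    | some (Sum.inl z) => Sum.inl z
    | some (Sum.inr (Sum.inl j)) => Sum.inr (Sum.inl j)
    | some (Sum.inr (Sum.inr j)) => Sum.inr (Sum.inr j.castSucc)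
  invFun := fun x => match x with
    | Sum.inl z => some (Sum.inl z)
    | Sum.inr (Sum.inl j) => some (Sum.inr (Sum.inl j))
    | Sum.inr (Sum.inr j) => if h : j.val < l then some (Sum.inr (Sum.inr ⟨j.val, h⟩)) else none
  left_inv := by
    rintro (_|((z|z)|(j|j))) <;> simp
  right_inv := by
    rintro ((z|z)|(j|j))
    · rfl
    · rfl
    · rfl
    · by_cases h : j.val < l
      · simp [h, Fin.ext_iff]
      · simp [h, Fin.ext_iff, Fin.val_last]
        have := j.isLt; omega

lemma stepEquivQ_none (k l : ℕ) : stepEquivQ k l none = Sum.inr (Sum.inr (Fin.last l)) := rfl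
lemma stepEquivQ_ab (k l : ℕ) (z : Fin 3 ⊕ Fin 3) :
    stepEquivQ k l (some (Sum.inl z)) = Sum.inl z := rfl
lemma stepEquivQ_p (k l : ℕ) (j : Fin k) :
    stepEquivQ k l (some (Sum.inr (Sum.inl j))) = Sum.inr (Sum.inl j) := rfl
lemma stepEquivQ_q (k l : ℕ) (j : Fin l) :
    stepEquivQ k l (some (Sum.inr (Sum.inr j))) = Sum.inr (Sum.inr j.castSucc) := rfl

lemma qstepQ0 (k : ℕ) (a b : Option (QV k 0)) :
    (subdivideEdge (QG k 0) (Sum.inl (Sum.inl 0)) (Sum.inl (Sum.inr 2))).Adj a b ↔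
    (QG k 1).Adj (stepEquivQ k 0 a) (stepEquivQ k 0 b) := by
  rcases a with _|((i|i)|(j|j)) <;> rcases b with _|((i'|i')|(j'|j')) <;>
    simp only [stepEquivQ_none, stepEquivQ_ab, stepEquivQ_p, stepEquivQ_q,
      subdiv_adj_ss, subdiv_adj_sn, subdiv_adj_ns, subdiv_adj_nn, QG_adj, qadj,
      Sum.inl.injEq, Sum.inr.injEq, Bool.or_eq_true, Bool.and_eq_true, beq_iff_eq,
      Bool.not_eq_true', Bool.and_eq_false_iff, Fin.coe_castSucc, Fin.val_last,
      decide_eq_true_eq, decide_eq_false_iff_not, beq_eq_false_iff_ne, ne_eq,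
      Fin.ext_iff, false_and, and_false, or_false, false_or, and_true, true_and,
      iff_self, not_false_iff, reduceCtorEq, Sum.elim_inl, Sum.elim_inr,
      Nat.succ_ne_zero] <;>
    first
      | rfl
      | omega
      | tauto
      | (exact iff_of_false id (by omega))
      | (exact j.elim0)
      | (exact j'.elim0)
      | (revert i i'; decide)
      | (revert i; decide)
      | (revert i'; decide)
      | skip

lemma qstepQS (k m : ℕ) (a b : Option (QV k (m+1))) :
    (subdivideEdge (QG k (m+1)) (Sum.inr (Sum.inr (Fin.last m))) (Sum.inl (Sum.inr 2))).Adj a b ↔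
    (QG k (m+2)).Adj (stepEquivQ k (m+1) a) (stepEquivQ k (m+1) b) := by
  rcases a with _|((i|i)|(j|j)) <;> rcases b with _|((i'|i')|(j'|j')) <;>
    simp only [stepEquivQ_none, stepEquivQ_ab, stepEquivQ_p, stepEquivQ_q,
      subdiv_adj_ss, subdiv_adj_sn, subdiv_adj_ns, subdiv_adj_nn, QG_adj, qadj,
      Sum.inl.injEq, Sum.inr.injEq, Bool.or_eq_true, Bool.and_eq_true, beq_iff_eq,
      Bool.not_eq_true', Bool.and_eq_false_iff, Fin.coe_castSucc, Fin.val_last,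
      decide_eq_true_eq, decide_eq_false_iff_not, beq_eq_false_iff_ne, ne_eq,
      Fin.ext_iff, false_and, and_false, or_false, false_or, and_true, true_and,
      iff_self, not_false_iff, reduceCtorEq, Sum.elim_inl, Sum.elim_inr,
      Nat.succ_ne_zero] <;>
    first
      | rfl
      | omega
      | tauto
      | (exact iff_of_false id (by omega))
      | (revert i i'; decide)
      | (revert i; decide)
      | (revert i'; decide)
      | skip

end QStepQ

section QChain

lemma qsucc {k l : ℕ} {H' : FinGraph} (hH : IsSubdivisionOf K33Graph H')
    (g : H'.graph ≃g QG k l) :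
    ∃ H'' : FinGraph, IsSubdivisionOf K33Graph H'' ∧ Nonempty (H''.graph ≃g QG (k+1) l) := by
  rcases k with _ | m
  · have huw : (QG 0 l).Adj (Sum.inl (Sum.inl 1)) (Sum.inl (Sum.inr 1)) :=
      Or.inl (by simp [qadj])
    exact ⟨⟨Option (QV 0 l), inferInstance, subdivideEdge (QG 0 l) _ _⟩, chain_ext hH g huw,
      ⟨⟨stepEquiv 0 l, fun {a b} => (qstep0 l a b).symm⟩⟩⟩
  · have huw : (QG (m+1) l).Adj (Sum.inr (Sum.inl (Fin.last m))) (Sum.inl (Sum.inr 1)) :=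
      Or.inr (by simp [qadj])
    exact ⟨⟨Option (QV (m+1) l), inferInstance, subdivideEdge (QG (m+1) l) _ _⟩,
      chain_ext hH g huw, ⟨⟨stepEquiv (m+1) l, fun {a b} => (qstepS m l a b).symm⟩⟩⟩

lemma qsuccQ {k l : ℕ} {H' : FinGraph} (hH : IsSubdivisionOf K33Graph H')
    (g : H'.graph ≃g QG k l) :
    ∃ H'' : FinGraph, IsSubdivisionOf K33Graph H'' ∧ Nonempty (H''.graph ≃g QG k (l+1)) := by
  rcases l with _ | m
  · have huw : (QG k 0).Adj (Sum.inl (Sum.inl 0)) (Sum.inl (Sum.inr 2)) :=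
      Or.inl (by simp [qadj])
    exact ⟨⟨Option (QV k 0), inferInstance, subdivideEdge (QG k 0) _ _⟩, chain_ext hH g huw,
      ⟨⟨stepEquivQ k 0, fun {a b} => (qstepQ0 k a b).symm⟩⟩⟩
  · have huw : (QG k (m+1)).Adj (Sum.inr (Sum.inr (Fin.last m))) (Sum.inl (Sum.inr 2)) :=
      Or.inr (by simp [qadj])
    exact ⟨⟨Option (QV k (m+1)), inferInstance, subdivideEdge (QG k (m+1)) _ _⟩,
      chain_ext hH g huw, ⟨⟨stepEquivQ k (m+1), fun {a b} => (qstepQS k m a b).symm⟩⟩⟩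

lemma qchain (k l : ℕ) :
    ∃ H' : FinGraph, IsSubdivisionOf K33Graph H' ∧ Nonempty (H'.graph ≃g QG k l) := by
  induction l with
  | zero =>
    induction k with
    | zero => exact ⟨K33Graph, Relation.ReflTransGen.refl, ⟨qbase⟩⟩
    | succ m ih =>
      obtain ⟨H', h1, ⟨g⟩⟩ := ih
      exact qsucc h1 g
  | succ m ih =>
    obtain ⟨H', h1, ⟨g⟩⟩ := ih
    exact qsuccQ h1 g

end QChain

section Pattern
variable {n : ℕ}

/-- The spanning subgraph of the Möbius ladder: full cycle plus the three rungs at 0,1,2. -/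
def patSub (n : ℕ) : (MobiusLadder n).Subgraph where
  verts := Set.univ
  Adj x y := (MobiusLadder n).Adj x y ∧ (x = y + 1 ∨ y = x + 1 ∨
    x = ((0:ℕ) : ZMod (2*n)) ∨ x = ((1:ℕ) : ZMod (2*n)) ∨ x = ((2:ℕ) : ZMod (2*n)) ∨
    y = ((0:ℕ) : ZMod (2*n)) ∨ y = ((1:ℕ) : ZMod (2*n)) ∨ y = ((2:ℕ) : ZMod (2*n)))
  adj_sub := fun h => h.1
  edge_vert := fun _ => Set.mem_univ _
  symm := by constructor; rintro x y ⟨h1, h2⟩; exact ⟨h1.symm, by tauto⟩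

lemma cast_succ_eq_iff (a b : ℕ) (ha : a < 2*n) (hb : b < 2*n) :
    ((a : ZMod (2*n)) = (b : ZMod (2*n)) + 1) ↔ (a = b + 1 ∨ (b = 2*n - 1 ∧ a = 0)) := by
  rw [show ((b : ZMod (2*n)) + 1) = ((b+1 : ℕ) : ZMod (2*n)) by push_cast; ring, cast_eq_iff]
  rcases eq_or_lt_of_le (show b+1 ≤ 2*n by omega) with h|h
  · rw [h, Nat.mod_self, Nat.mod_eq_of_lt ha]; omega
  · rw [Nat.mod_eq_of_lt ha, Nat.mod_eq_of_lt h]; omega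

lemma cast_rung_eq_iff (a b : ℕ) (ha : a < 2*n) (hb : b < 2*n) :
    ((a : ZMod (2*n)) = (b : ZMod (2*n)) + ((n:ℕ) : ZMod (2*n))) ↔
      (a = b + n ∨ b = a + n) := by
  rw [show ((b : ZMod (2*n)) + ((n:ℕ) : ZMod (2*n))) = ((b+n : ℕ) : ZMod (2*n)) by
    push_cast; ring, cast_eq_iff]
  rcases lt_or_ge (b+n) (2*n) with h|h
  · rw [Nat.mod_eq_of_lt ha, Nat.mod_eq_of_lt h]; omega
  · rw [Nat.mod_eq_of_lt ha, Nat.mod_eq_sub_mod h, Nat.mod_eq_of_lt (by omega)]; omega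

lemma pat_adj_iff (hn : 3 ≤ n) (a b : ℕ) (ha : a < 2*n) (hb : b < 2*n) :
    (patSub n).Adj ((a : ZMod (2*n))) ((b : ZMod (2*n))) ↔
      (a ≠ b ∧ ((a = b+1 ∨ (b = 2*n-1 ∧ a = 0)) ∨ (b = a+1 ∨ (a = 2*n-1 ∧ b = 0)) ∨
        ((a = b + n ∨ b = a + n) ∧ (a ≤ 2 ∨ b ≤ 2)))) := by
  show ((MobiusLadder n).Adj _ _ ∧ _) ↔ _
  rw [show (MobiusLadder n).Adj ((a : ZMod (2*n))) ((b : ZMod (2*n))) ↔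
      (((a:ZMod (2*n)) ≠ (b:ZMod (2*n))) ∧
        ((a:ZMod (2*n)) = (b:ZMod (2*n)) + 1 ∨ (b:ZMod (2*n)) = (a:ZMod (2*n)) + 1 ∨
         (a:ZMod (2*n)) = (b:ZMod (2*n)) + ((n:ℕ) : ZMod (2*n)))) from Iff.rfl]
  simp only [ne_eq]
  rw [cast_succ_eq_iff a b ha hb, cast_succ_eq_iff b a hb ha, cast_rung_eq_iff a b ha hb,
    cast_inj_lt ha hb,
    cast_inj_lt ha (show (0:ℕ) < 2*n by omega), cast_inj_lt ha (show (1:ℕ) < 2*n by omega),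
    cast_inj_lt ha (show (2:ℕ) < 2*n by omega), cast_inj_lt hb (show (0:ℕ) < 2*n by omega),
    cast_inj_lt hb (show (1:ℕ) < 2*n by omega), cast_inj_lt hb (show (2:ℕ) < 2*n by omega)]
  omega

def vmap (n : ℕ) : QV (n-3) (n-3) → ℕ
  | .inl (.inl i) => if i.val = 0 then 0 else if i.val = 1 then 2 else n+1
  | .inl (.inr i) => if i.val = 0 then 1 else if i.val = 1 then n else n+2
  | .inr (.inl j) => 3 + j.val
  | .inr (.inr j) => 2*n - 1 - j.val

lemma vmap_lt (hn : 3 ≤ n) (x : QV (n-3) (n-3)) : vmap n x < 2*n := by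
  rcases x with ((i|i)|(j|j)) <;> simp only [vmap] <;>
    first
    | (split_ifs <;> omega)
    | (have := j.isLt; omega)

lemma vmap_inj (hn : 3 ≤ n) : Function.Injective (vmap n) := by
  intro x y h
  rcases x with ((i|i)|(j|j)) <;> rcases y with ((i'|i')|(j'|j')) <;>
    simp only [vmap] at h <;>
    (try simp only [Sum.inl.injEq, Sum.inr.injEq, Fin.ext_iff]) <;>
    (try have hj := j.isLt) <;> (try have hj' := j'.isLt) <;>
    (try have hi := i.isLt) <;> (try have hi' := i'.isLt) <;>
    (try split_ifs at h) <;>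
    first
      | omega
      | (exact absurd h (by omega))

lemma vmap_surj (hn : 3 ≤ n) (c : ℕ) (hc : c < 2*n) : ∃ x, vmap n x = c := by
  rcases (by omega : c = 0 ∨ c = 1 ∨ c = 2 ∨ (3 ≤ c ∧ c ≤ n-1) ∨ c = n ∨ c = n+1 ∨ c = n+2 ∨
    (n+3 ≤ c ∧ c ≤ 2*n-1)) with rfl|rfl|rfl|⟨h1,h2⟩|rfl|rfl|rfl|⟨h1,h2⟩
  · exact ⟨Sum.inl (Sum.inl ⟨0, by omega⟩), by simp [vmap]⟩
  · exact ⟨Sum.inl (Sum.inr ⟨0, by omega⟩), by simp [vmap]⟩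
  · exact ⟨Sum.inl (Sum.inl ⟨1, by omega⟩), by simp [vmap]⟩
  · exact ⟨Sum.inr (Sum.inl ⟨c-3, by omega⟩), by simp [vmap]; omega⟩
  · exact ⟨Sum.inl (Sum.inr ⟨1, by omega⟩), by simp [vmap]⟩
  · exact ⟨Sum.inl (Sum.inl ⟨2, by omega⟩), by simp [vmap]⟩
  · exact ⟨Sum.inl (Sum.inr ⟨2, by omega⟩), by simp [vmap]⟩
  · exact ⟨Sum.inr (Sum.inr ⟨2*n-1-c, by omega⟩), by simp [vmap]; omega⟩

end Pattern

section PatIso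
variable {n : ℕ}

noncomputable def patIso (hn : 3 ≤ n) : QG (n-3) (n-3) ≃g (patSub n).coe := by
  haveI : NeZero (2*n) := ⟨by omega⟩
  refine ⟨Equiv.ofBijective
    (fun x => (⟨((vmap n x : ℕ) : ZMod (2*n)), Set.mem_univ _⟩ : ↥(patSub n).verts)) ⟨?_, ?_⟩, ?_⟩
  · intro x y hxy
    have h2 : ((vmap n x : ℕ) : ZMod (2*n)) = ((vmap n y : ℕ) : ZMod (2*n)) :=
      congrArg Subtype.val hxy
    exact vmap_inj hn ((cast_inj_lt (vmap_lt hn x) (vmap_lt hn y)).1 h2)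
  · rintro ⟨v, hv⟩
    obtain ⟨x, hx⟩ := vmap_surj hn v.val (ZMod.val_lt v)
    refine ⟨x, ?_⟩
    apply Subtype.ext
    show ((vmap n x : ℕ) : ZMod (2*n)) = v
    rw [hx, ZMod.natCast_val, ZMod.cast_id]
  · intro x y
    show (patSub n).coe.Adj _ _ ↔ _
    rw [SimpleGraph.Subgraph.coe_adj]
    show (patSub n).Adj ((vmap n x : ℕ) : ZMod (2*n)) ((vmap n y : ℕ) : ZMod (2*n)) ↔ _
    rw [pat_adj_iff hn _ _ (vmap_lt hn x) (vmap_lt hn y)]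
    rcases x with ((i|i)|(j|j)) <;> rcases y with ((i'|i')|(j'|j')) <;>
      simp only [vmap, QG_adj, qadj, Sum.inl.injEq, Sum.inr.injEq, Bool.or_eq_true,
        Bool.and_eq_true, beq_iff_eq, Bool.not_eq_true', Bool.and_eq_false_iff,
        decide_eq_true_eq, decide_eq_false_iff_not, beq_eq_false_iff_ne, ne_eq,
        Fin.ext_iff, false_and, and_false, or_false, false_or, and_true, true_and,
        not_false_iff, reduceCtorEq] <;>
      (try have hj := j.isLt) <;> (try have hj' := j'.isLt) <;>
      (try have hi := i.isLt) <;> (try have hi' := i'.isLt) <;>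
      (try split_ifs) <;>
      (try simp only [false_or, or_false, false_and, and_false, true_and, and_true, not_true,
        not_false_iff, iff_false, iff_true, false_iff, true_iff, or_true, true_or, not_or,
        eq_self_iff_true, not_not]) <;>
      omega

lemma mob_k33 (hn : 3 ≤ n) : ContainsSubdivOf K33Graph (MobiusLadder n) := by
  obtain ⟨H', h1, ⟨g⟩⟩ := qchain (n-3) (n-3)
  exact ⟨patSub n, H', h1, ⟨g.trans (patIso hn)⟩⟩

end PatIso

section Assemble
variable {n : ℕ}

lemma mob_conn_empty (hn : 3 ≤ n) : ¬ Separates (MobiusLadder n) (∅ : Set (ZMod (2*n))) := by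
  haveI : NeZero (2*n) := ⟨by omega⟩
  rw [Separates, not_not, connected_iff_exists_forall_reachable]
  refine ⟨⟨0, by simp⟩, ?_⟩
  rintro ⟨v, hv⟩
  exact mob_arc hn ∅ ((v - 0).val) 0 v (by simp) hv (val_form 0 v) (fun j hj => by simp)

lemma mob_connected (hn : 3 ≤ n) : (MobiusLadder n).Connected := by
  have h := mob_conn_empty hn
  rw [Separates, not_not, Set.compl_empty] at h
  exact ((induceUnivIso (MobiusLadder n)).connected_iff).1 h

lemma mob_clique_small (hn : 3 ≤ n) {K : Set (ZMod (2*n))} (hK : (MobiusLadder n).IsClique K)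
    {x : ZMod (2*n)} (hx : x ∉ K) (hadj : ∀ k ∈ K, (MobiusLadder n).Adj x k) :
    K = ∅ ∨ ∃ k, K = {k} := by
  by_cases he : K = ∅
  · exact Or.inl he
  obtain ⟨a, haK⟩ := Set.nonempty_iff_ne_empty.2 he
  refine Or.inr ⟨a, ?_⟩
  ext b
  simp only [Set.mem_singleton_iff]
  refine ⟨fun hbK => ?_, fun h => h ▸ haK⟩
  by_contra hba
  exact (mob_cliquefree hn) {a, b, x}
    ((is3Clique_triple_iff).2 ⟨hK haK hbK (Ne.symm hba), (hadj a haK).symm, (hadj b hbK).symm⟩)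

lemma mob_clique_sep (hn : 3 ≤ n) (K : Set (ZMod (2*n))) (hK : (MobiusLadder n).IsClique K) :
    ¬ Separates (MobiusLadder n) K := by
  by_cases h2 : ∃ a ∈ K, ∃ b ∈ K, a ≠ b
  · obtain ⟨a, ha, b, hb, hab⟩ := h2
    have hKeq : K = {a, b} := by
      ext x
      simp only [Set.mem_insert_iff, Set.mem_singleton_iff]
      refine ⟨fun hx => ?_, fun h => by rcases h with rfl | rfl <;> assumption⟩
      by_contra hc
      push_neg at hc
      exact (mob_cliquefree hn) {a, b, x}
        ((is3Clique_triple_iff).2 ⟨hK ha hb hab, hK ha hx (Ne.symm hc.1), hK hb hx (Ne.symm hc.2)⟩)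
    rw [hKeq]; exact mob_pair hn a b
  · push_neg at h2
    by_cases he : K = ∅
    · rw [he]; exact mob_conn_empty hn
    · obtain ⟨a, haK⟩ := Set.nonempty_iff_ne_empty.2 he
      have : K = {a} := by
        ext x
        simp only [Set.mem_singleton_iff]
        exact ⟨fun hx => h2 x hx a haK, fun h => h ▸ haK⟩
      rw [this]
      have hp := mob_pair hn a a
      rwa [Set.pair_eq_singleton] at hp

lemma mob_suspension_sep (hn : 3 ≤ n) (K : Set (ZMod (2*n))) (u w : ZMod (2*n))
    (hK : (MobiusLadder n).IsClique K) (huw : u ≠ w) (hnadj : ¬ (MobiusLadder n).Adj u w)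
    (huK : u ∉ K) (hwK : w ∉ K) (hadj : ∀ k ∈ K, (MobiusLadder n).Adj u k ∧ (MobiusLadder n).Adj w k) :
    ¬ Separates (MobiusLadder n) (K ∪ {u, w}) := by
  rcases mob_clique_small hn hK huK (fun k hk => (hadj k hk).1) with he | ⟨k, hk⟩
  · rw [he, Set.empty_union]; exact mob_pair hn u w
  · rw [hk, Set.singleton_union]
    exact mob_triple hn k u w ((hadj k (hk ▸ rfl)).1.symm) ((hadj k (hk ▸ rfl)).2.symm) huw
end Assemble


/-- for every `n ≥ 3`, the Möbius ladder `M_n` is triangle-free, contains a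
`K_{3,3}` subdivision, and is inseparable: it is connected, no vertex set of a complete
subgraph separates it, no pair of vertices separates it, and no vertex set of a complete
subgraph suspension separates it. -/
theorem mobiusLadder_triangle_free_nonplanar_inseparable (n : ℕ) (hn : 3 ≤ n) :
    (MobiusLadder n).CliqueFree 3 ∧
    ContainsSubdivOf K33Graph (MobiusLadder n) ∧
    (MobiusLadder n).Connected ∧
    (∀ K : Set (ZMod (2 * n)), (MobiusLadder n).IsClique K →
      ¬ Separates (MobiusLadder n) K) ∧
    (∀ u w : ZMod (2 * n), u ≠ w → ¬ Separates (MobiusLadder n) {u, w}) ∧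
    (∀ (K : Set (ZMod (2 * n))) (u w : ZMod (2 * n)), (MobiusLadder n).IsClique K →
      u ≠ w → ¬ (MobiusLadder n).Adj u w → u ∉ K → w ∉ K →
      (∀ k ∈ K, (MobiusLadder n).Adj u k ∧ (MobiusLadder n).Adj w k) →
      ¬ Separates (MobiusLadder n) (K ∪ {u, w})) := by
  refine ⟨mob_cliquefree hn, mob_k33 hn, mob_connected hn, mob_clique_sep hn,
    fun u w h => mob_pair hn u w,
    fun K u w h1 h2 h3 h4 h5 h6 => mob_suspension_sep hn K u w h1 h2 h3 h4 h5 h6⟩
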